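/- Let F be a field and let M be an n×m matrix over F. If A, A' ∈ T_n(F) and B, B' ∈ T_m(F) are unitriangular matrices such that both A·M·B and A'·M·B' are rook matrices, then A·M·B = A'·M·B'. (Uniqueness part of the enhanced Bruhat decomposition: every orbit of the action of T_n(F) × T_m(F) on n×m matrices contains at most one rook matrix.) -/
import Mathlib

/-- A square matrix is unitriangular if it is upper triangular with 1's on the diagonal. -/
def Matrix.IsUnitriangular {n : ℕ} {R : Type*} [Zero R] [One R]
    (A : Matrix (Fin n) (Fin n) R) : Prop :=
  (∀ i, A i i = 1) ∧ ∀ i j : Fin n, j < i → A i j = 0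

/-- A matrix is a rook matrix if every row and every column contains
at most one nonzero entry. -/
def Matrix.IsRook {n m : ℕ} {F : Type*} [Zero F]
    (R : Matrix (Fin n) (Fin m) F) : Prop :=
  (∀ i j j', R i j ≠ 0 → R i j' ≠ 0 → j = j') ∧
  (∀ i i' j, R i j ≠ 0 → R i' j ≠ 0 → i = i')

section Aux

variable {F : Type*} [Field F] {n m : ℕ}

lemma aux_corner (U : Matrix (Fin n) (Fin n) F) (R : Matrix (Fin n) (Fin m) F)
    (V : Matrix (Fin m) (Fin m) F)
    (hU : U.IsUnitriangular) (hV : V.IsUnitriangular) (i : Fin n) (j : Fin m)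
    (hrow0 : ∀ l : Fin m, l < j → R i l = 0)
    (hcol0 : ∀ k : Fin n, i < k → R k j = 0)
    (hagree : ∀ l : Fin m, l < j → (U * R * V) i l = R i l) :
    (U * R * V) i j = R i j := by
  -- first: (U*R) i l = 0 for l < j
  have hx : ∀ l : Fin m, l < j → (U * R) i l = 0 := by
    have key : ∀ t : ℕ, ∀ l : Fin m, l.val < t → l < j → (U * R) i l = 0 := by
      intro t
      induction t with
      | zero => exact fun l h => absurd h (Nat.not_lt_zero _)
      | succ t IH =>
        intro l hlt hlj
        have h1 : (U * R * V) i l = (U * R) i l := by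
          rw [Matrix.mul_apply]
          rw [Finset.sum_eq_single l]
          · rw [hV.1 l, mul_one]
          · intro b _ hb
            rcases lt_or_gt_of_ne hb with hbl | hbl
            · rw [IH b (by omega) (lt_trans hbl hlj), zero_mul]
            · rw [hV.2 b l hbl, mul_zero]
          · intro h; exact absurd (Finset.mem_univ l) h
        have h2 : (U * R * V) i l = 0 := by rw [hagree l hlj, hrow0 l hlj]
        rw [← h1, h2]
    exact fun l hlj => key (l.val + 1) l (Nat.lt_succ_self _) hlj
  have h3 : (U * R * V) i j = (U * R) i j := by
    rw [Matrix.mul_apply]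
    rw [Finset.sum_eq_single j]
    · rw [hV.1 j, mul_one]
    · intro b _ hb
      rcases lt_or_gt_of_ne hb with hbl | hbl
      · rw [hx b hbl, zero_mul]
      · rw [hV.2 b j hbl, mul_zero]
    · intro h; exact absurd (Finset.mem_univ j) h
  rw [h3, Matrix.mul_apply]
  rw [Finset.sum_eq_single i]
  · rw [hU.1 i, one_mul]
  · intro b _ hb
    rcases lt_or_gt_of_ne hb with hbl | hbl
    · rw [hU.2 i b hbl, zero_mul]
    · rw [hcol0 b hbl, mul_zero]
  · intro h; exact absurd (Finset.mem_univ i) h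

lemma aux_key (U : Matrix (Fin n) (Fin n) F) (R : Matrix (Fin n) (Fin m) F)
    (V : Matrix (Fin m) (Fin m) F)
    (hU : U.IsUnitriangular) (hV : V.IsUnitriangular)
    (hR : R.IsRook) (hR' : (U * R * V).IsRook) :
    U * R * V = R := by
  have main : ∀ t : ℕ, ∀ (i : Fin n) (j : Fin m),
      (n - i.val) + j.val < t → (U * R * V) i j = R i j := by
    intro t
    induction t with
    | zero => exact fun i j h => absurd h (Nat.not_lt_zero _)
    | succ t IH =>
      intro i j hμ
      have hrowagree : ∀ l : Fin m, l < j → (U * R * V) i l = R i l := by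
        intro l hl
        exact IH i l (by have := l.isLt; have : l.val < j.val := hl; omega)
      have hcolagree : ∀ k : Fin n, i < k → (U * R * V) k j = R k j := by
        intro k hk
        refine IH k j ?_
        have h1 : i.val < k.val := hk
        have h2 : k.val < n := k.isLt
        omega
      by_cases h1 : R i j = 0
      · by_cases h2 : (U * R * V) i j = 0
        · rw [h1, h2]
        · -- R' i j ≠ 0, use rookness of R'
          refine aux_corner U R V hU hV i j ?_ ?_ hrowagree
          · intro l hl
            rw [← hrowagree l hl]
            by_contra hc
            exact absurd (hR'.1 i l j hc h2) (ne_of_lt hl)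
          · intro k hk
            rw [← hcolagree k hk]
            by_contra hc
            exact absurd (hR'.2 k i j hc h2) (ne_of_gt hk)
      · refine aux_corner U R V hU hV i j ?_ ?_ hrowagree
        · intro l hl
          by_contra hc
          exact absurd (hR.1 i l j hc h1) (ne_of_lt hl)
        · intro k hk
          by_contra hc
          exact absurd (hR.2 k i j hc h1) (ne_of_gt hk)
  ext i j
  exact main ((n - i.val) + j.val + 1) i j (Nat.lt_succ_self _)

lemma unitri_blockTriangular (A : Matrix (Fin n) (Fin n) F) (hA : A.IsUnitriangular) :
    A.BlockTriangular id := fun i j h => hA.2 i j h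

lemma unitri_det (A : Matrix (Fin n) (Fin n) F) (hA : A.IsUnitriangular) : A.det = 1 := by
  rw [Matrix.det_of_upperTriangular (unitri_blockTriangular A hA)]
  simp [hA.1]

lemma unitri_mul (A B : Matrix (Fin n) (Fin n) F)
    (hA : A.IsUnitriangular) (hB : B.IsUnitriangular) : (A * B).IsUnitriangular := by
  constructor
  · intro i
    rw [Matrix.mul_apply, Finset.sum_eq_single i]
    · rw [hA.1 i, hB.1 i, one_mul]
    · intro b _ hb
      rcases lt_or_gt_of_ne hb with hbl | hbl
      · rw [hA.2 i b hbl, zero_mul]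
      · rw [hB.2 b i hbl, mul_zero]
    · intro h; exact absurd (Finset.mem_univ i) h
  · intro i j hji
    rw [Matrix.mul_apply]
    apply Finset.sum_eq_zero
    intro k _
    rcases lt_or_ge k i with hk | hk
    · rw [hA.2 i k hk, zero_mul]
    · rw [hB.2 k j (lt_of_lt_of_le hji hk), mul_zero]

lemma unitri_inv (A : Matrix (Fin n) (Fin n) F) (hA : A.IsUnitriangular) :
    A⁻¹.IsUnitriangular := by
  have hdet : IsUnit A.det := by rw [unitri_det A hA]; exact isUnit_one
  have : Invertible A := A.invertibleOfIsUnitDet hdet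
  have htri : A⁻¹.BlockTriangular id :=
    Matrix.blockTriangular_inv_of_blockTriangular (unitri_blockTriangular A hA)
  refine ⟨?_, fun i j h => htri h⟩
  intro i
  have h1 : (A * A⁻¹) i i = 1 := by rw [Matrix.mul_nonsing_inv A hdet]; simp
  rw [Matrix.mul_apply, Finset.sum_eq_single i] at h1
  · rwa [hA.1 i, one_mul] at h1
  · intro b _ hb
    rcases lt_or_gt_of_ne hb with hbl | hbl
    · rw [hA.2 i b hbl, zero_mul]
    · exact mul_eq_zero_of_right _ (htri hbl)
  · intro h; exact absurd (Finset.mem_univ i) h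

end Aux

/-- Uniqueness part of the enhanced Bruhat decomposition: an orbit of the action of
`T_n(F) × T_m(F)` on `n × m` matrices contains at most one rook matrix. -/
theorem enhanced_bruhat_uniqueness {F : Type*} [Field F] {n m : ℕ}
    (M : Matrix (Fin n) (Fin m) F)
    (A A' : Matrix (Fin n) (Fin n) F) (B B' : Matrix (Fin m) (Fin m) F)
    (hA : A.IsUnitriangular) (hA' : A'.IsUnitriangular)
    (hB : B.IsUnitriangular) (hB' : B'.IsUnitriangular)
    (hR : (A * M * B).IsRook) (hR' : (A' * M * B').IsRook) :
    A * M * B = A' * M * B' := by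
  have hdetA : IsUnit A.det := by rw [unitri_det A hA]; exact isUnit_one
  have hdetB : IsUnit B.det := by rw [unitri_det B hB]; exact isUnit_one
  set U := A' * A⁻¹ with hUdef
  set V := B⁻¹ * B' with hVdef
  have hU : U.IsUnitriangular := unitri_mul _ _ hA' (unitri_inv A hA)
  have hV : V.IsUnitriangular := unitri_mul _ _ (unitri_inv B hB) hB'
  have hfact : U * (A * M * B) * V = A' * M * B' := by
    rw [hUdef, hVdef]
    calc A' * A⁻¹ * (A * M * B) * (B⁻¹ * B')
        = A' * (A⁻¹ * A) * M * (B * B⁻¹) * B' := by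
          simp only [Matrix.mul_assoc]
      _ = A' * M * B' := by
          rw [Matrix.nonsing_inv_mul A hdetA, Matrix.mul_nonsing_inv B hdetB]
          simp [Matrix.mul_assoc]
  have hrk' : (U * (A * M * B) * V).IsRook := by rw [hfact]; exact hR'
  have := aux_key U (A * M * B) V hU hV hR hrk'
  rw [← hfact, this]
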